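/- arXiv:2507.13307 — 2 statements merged into one kernel-verified Lean document; each statement's English description precedes it below -/
import Mathlib

section
/- Let τ_1, τ_2 > 0, η, σ², ε > 0 and P ≥ ε(τ_1 + τ_2). Consider maximizing log(1 + ηP_1/(σ²τ_1)) + log(1 + ηP_2/(σ²τ_2)) subject to P_1 ≥ ετ_1, P_2 ≥ ετ_2, P_1 + P_2 ≤ P. If 1/(P − ετ_2 + σ²τ_1/η) ≥ 1/(ετ_2 + σ²τ_2/η), then the optimal solution is P_1 = P − ετ_2, P_2 = ετ_2. -/
theorem stmt_15 (τ1 τ2 η σ2 ε P : ℝ)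
    (hτ1 : 0 < τ1) (hτ2 : 0 < τ2) (hη : 0 < η) (hσ : 0 < σ2) (hε : 0 < ε)
    (hP : ε * (τ1 + τ2) ≤ P)
    (hcond : 1 / (ε * τ2 + σ2 * τ2 / η) ≤ 1 / (P - ε * τ2 + σ2 * τ1 / η)) :
    ∀ Q1 Q2 : ℝ, ε * τ1 ≤ Q1 → ε * τ2 ≤ Q2 → Q1 + Q2 ≤ P →
      Real.log (1 + η * Q1 / (σ2 * τ1)) + Real.log (1 + η * Q2 / (σ2 * τ2))
        ≤ Real.log (1 + η * (P - ε * τ2) / (σ2 * τ1))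
          + Real.log (1 + η * (ε * τ2) / (σ2 * τ2)) := by
  intro Q1 Q2 hQ1 hQ2 hsum
  have ht1 : 0 < σ2 * τ1 := by positivity
  have ht2 : 0 < σ2 * τ2 := by positivity
  have hA : 0 < P - ε * τ2 + σ2 * τ1 / η := by nlinarith [mul_pos hε hτ1, div_pos ht1 hη]
  have hB : 0 < ε * τ2 + σ2 * τ2 / η := by positivity
  have hkey : P - ε * τ2 + σ2 * τ1 / η ≤ ε * τ2 + σ2 * τ2 / η := by
    have h := (div_le_div_iff₀ hB hA).mp hcond
    linarith
  have hkey' : η * (P - ε * τ2) + σ2 * τ1 ≤ η * (ε * τ2) + σ2 * τ2 := by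
    have := mul_le_mul_of_nonneg_left hkey (le_of_lt hη)
    field_simp at this
    nlinarith [this]
  have hQ1' : 0 < Q1 := lt_of_lt_of_le (by positivity) hQ1
  have hQ2' : 0 < Q2 := lt_of_lt_of_le (by positivity) hQ2
  have p1 : 0 < 1 + η * Q1 / (σ2 * τ1) := by positivity
  have p2 : 0 < 1 + η * Q2 / (σ2 * τ2) := by positivity
  have p3 : 0 < 1 + η * (P - ε * τ2) / (σ2 * τ1) := by
    have : 0 < P - ε * τ2 := by nlinarith [mul_pos hε hτ1]
    positivity
  have p4 : 0 < 1 + η * (ε * τ2) / (σ2 * τ2) := by positivity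
  have hprod : (1 + η * Q1 / (σ2 * τ1)) * (1 + η * Q2 / (σ2 * τ2))
      ≤ (1 + η * (P - ε * τ2) / (σ2 * τ1)) * (1 + η * (ε * τ2) / (σ2 * τ2)) := by
    rw [add_div' _ _ _ ht1.ne', add_div' _ _ _ ht2.ne', add_div' _ _ _ ht1.ne',
      add_div' _ _ _ ht2.ne', div_mul_div_comm, div_mul_div_comm,
      div_le_div_iff₀ (by positivity) (by positivity)]
    ring_nf
    nlinarith [mul_nonneg (mul_nonneg hη.le (sub_nonneg.mpr hQ2))
        (by nlinarith : (0:ℝ) ≤ η * Q2 + η * (ε * τ2) + σ2 * τ2 - η * P - σ2 * τ1),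
      mul_nonneg (mul_nonneg hη.le (by linarith : (0:ℝ) ≤ P - Q2 - Q1))
        (by positivity : (0:ℝ) ≤ σ2 * τ2 + η * Q2),
      mul_pos ht1 ht2, mul_pos hη hQ2']
  calc Real.log (1 + η * Q1 / (σ2 * τ1)) + Real.log (1 + η * Q2 / (σ2 * τ2))
      = Real.log ((1 + η * Q1 / (σ2 * τ1)) * (1 + η * Q2 / (σ2 * τ2))) := by
        rw [Real.log_mul p1.ne' p2.ne']
    _ ≤ Real.log ((1 + η * (P - ε * τ2) / (σ2 * τ1)) * (1 + η * (ε * τ2) / (σ2 * τ2))) :=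
        Real.log_le_log (by positivity) hprod
    _ = _ := by rw [Real.log_mul p3.ne' p4.ne']
end

section
/- Let a, b, P > 0 and suppose the corner conditions fail, i.e., 1/(P − β + 1/a) < 1/(β + 1/b) and 1/(P − α + 1/b) < 1/(α + 1/a), where α, β ≥ 0 are the minimum powers with α + β ≤ P. Then the interior point P_1 = P/2 + 1/(2b) − 1/(2a), P_2 = P/2 + 1/(2a) − 1/(2b) is feasible (P_1 ≥ α, P_2 ≥ β) and is the unique maximizer of log(1+aP_1) + log(1+bP_2) subject to P_1 ≥ α, P_2 ≥ β, P_1 + P_2 = P. -/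
set_option maxHeartbeats 1000000 in
theorem stmt_19 (a b P α β : ℝ)
    (ha : 0 < a) (hb : 0 < b) (hP : 0 < P)
    (hα : 0 ≤ α) (hβ : 0 ≤ β) (hαβ : α + β ≤ P)
    (hc1 : 1 / (P - β + 1 / a) < 1 / (β + 1 / b))
    (hc2 : 1 / (P - α + 1 / b) < 1 / (α + 1 / a))
    (P1 P2 : ℝ)
    (hP1 : P1 = P / 2 + 1 / (2 * b) - 1 / (2 * a))
    (hP2 : P2 = P / 2 + 1 / (2 * a) - 1 / (2 * b)) :
    α ≤ P1 ∧ β ≤ P2 ∧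
    ∀ Q1 Q2 : ℝ, α ≤ Q1 → β ≤ Q2 → Q1 + Q2 = P →
      Real.log (1 + a * Q1) + Real.log (1 + b * Q2)
        ≤ Real.log (1 + a * P1) + Real.log (1 + b * P2) ∧
      (Real.log (1 + a * Q1) + Real.log (1 + b * Q2)
        = Real.log (1 + a * P1) + Real.log (1 + b * P2) → Q1 = P1 ∧ Q2 = P2) := by
  have hia : 0 < 1 / a := by positivity
  have hib : 0 < 1 / b := by positivity
  have hX2 : 0 < P - α + 1 / b := by linarith
  have hY2 : 0 < α + 1 / a := by linarith
  have hX1 : 0 < P - β + 1 / a := by linarith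
  have hY1 : 0 < β + 1 / b := by linarith
  have h2 := (div_lt_div_iff₀ hX2 hY2).mp hc2
  have h1 := (div_lt_div_iff₀ hX1 hY1).mp hc1
  have e1 : 1 / (2 * b) = (1 / b) / 2 := by
    rw [div_div]; ring_nf
  have e2 : 1 / (2 * a) = (1 / a) / 2 := by
    rw [div_div]; ring_nf
  have hαP1 : α < P1 := by rw [hP1, e1, e2]; nlinarith
  have hβP2 : β < P2 := by rw [hP2, e1, e2]; nlinarith
  refine ⟨hαP1.le, hβP2.le, ?_⟩
  intro Q1 Q2 hQ1 hQ2 hQs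
  have pQ1 : 0 < 1 + a * Q1 := by nlinarith
  have pQ2 : 0 < 1 + b * Q2 := by nlinarith
  have pP1 : 0 < 1 + a * P1 := by nlinarith
  have pP2 : 0 < 1 + b * P2 := by nlinarith
  have key : (1 + a * P1) * (1 + b * P2) - (1 + a * Q1) * (1 + b * Q2)
      = a * b * (Q1 - P1) ^ 2 := by
    have hau : a * (1 / a) = 1 := mul_one_div_cancel ha.ne'
    have hbv : b * (1 / b) = 1 := mul_one_div_cancel hb.ne'
    have hQ2' : Q2 = P - Q1 := by linarith
    rw [hP1, hP2, hQ2', e1, e2]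
    linear_combination (P / 2 + (1 / b) / 2 - (1 / a) / 2 - Q1) * b * hau
      - (P / 2 + (1 / b) / 2 - (1 / a) / 2 - Q1) * a * hbv
  have hprod : (1 + a * Q1) * (1 + b * Q2) ≤ (1 + a * P1) * (1 + b * P2) := by
    nlinarith [sq_nonneg (Q1 - P1), mul_pos ha hb]
  have lQ : Real.log (1 + a * Q1) + Real.log (1 + b * Q2)
      = Real.log ((1 + a * Q1) * (1 + b * Q2)) :=
    (Real.log_mul pQ1.ne' pQ2.ne').symm
  have lP : Real.log (1 + a * P1) + Real.log (1 + b * P2)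
      = Real.log ((1 + a * P1) * (1 + b * P2)) :=
    (Real.log_mul pP1.ne' pP2.ne').symm
  constructor
  · rw [lQ, lP]
    exact Real.log_le_log (by positivity) hprod
  · intro heq
    rw [lQ, lP] at heq
    have hpe : (1 + a * Q1) * (1 + b * Q2) = (1 + a * P1) * (1 + b * P2) :=
      Real.log_injOn_pos (Set.mem_Ioi.mpr (by positivity))
        (Set.mem_Ioi.mpr (by positivity)) heq
    have hsq : a * b * (Q1 - P1) ^ 2 = 0 := by linarith
    have : (Q1 - P1) ^ 2 = 0 := by
      have hab : a * b ≠ 0 := by positivity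
      exact by
        rcases mul_eq_zero.mp hsq with h | h
        · exact absurd h hab
        · exact h
    have hQ1P1 : Q1 = P1 := by nlinarith [sq_nonneg (Q1 - P1)]
    exact ⟨hQ1P1, by linarith⟩
end
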